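/- Let A ⊂ ℂ be a finite nonempty signal constellation. Then the MMSE function of A tends, as snr → 0⁺, to the variance of the uniform distribution on A: lim_{snr→0⁺} mmse_A(snr) = (1/|A|) Σ_{a∈A} |a|² − | (1/|A|) Σ_{a∈A} a |². -/

import Mathlib

open MeasureTheory Finset Filter

/-- Minimum mean-squared error in estimating the input, uniform on the finite
constellation `A ⊂ ℂ`, from the output of the complex Gaussian channel
`y = √snr · x + z` with noise density `(1/π) exp(-|z|²)`. -/
noncomputable def mmse (A : Finset ℂ) (snr : ℝ) : ℝ :=
  (1 / (A.card : ℝ)) * ∑ a ∈ A, (Norm.norm a) ^ 2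
  - (1 / (A.card : ℝ)) * ∑ a ∈ A, (1 / Real.pi) *
      ∫ z : ℂ, (Norm.norm
          ((∑ a' ∈ A, a' * (Real.exp (-(Norm.norm ((Real.sqrt snr : ℂ) * (a - a') + z)) ^ 2) : ℂ)) /
           (∑ a' ∈ A, (Real.exp (-(Norm.norm ((Real.sqrt snr : ℂ) * (a - a') + z)) ^ 2) : ℂ)))) ^ 2
        * Real.exp (-(Norm.norm z) ^ 2)

/-- Joint function of `(t, z)` whose specialization `t = √snr` is the mmse integrand. -/
noncomputable def gfun (A : Finset ℂ) (a : ℂ) (p : ℂ × ℂ) : ℝ :=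
  (Norm.norm
      ((∑ a' ∈ A, a' * (Real.exp (-(Norm.norm (p.1 * (a - a') + p.2)) ^ 2) : ℂ)) /
       (∑ a' ∈ A, (Real.exp (-(Norm.norm (p.1 * (a - a') + p.2)) ^ 2) : ℂ)))) ^ 2
    * Real.exp (-(Norm.norm p.2) ^ 2)

lemma gden_ne (A : Finset ℂ) (hA : A.Nonempty) (a : ℂ) (p : ℂ × ℂ) :
    (∑ a' ∈ A, (Real.exp (-(Norm.norm (p.1 * (a - a') + p.2)) ^ 2) : ℂ)) ≠ 0 := by
  have h : (∑ a' ∈ A, (Real.exp (-(Norm.norm (p.1 * (a - a') + p.2)) ^ 2) : ℂ))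
      = ((∑ a' ∈ A, Real.exp (-(Norm.norm (p.1 * (a - a') + p.2)) ^ 2) : ℝ) : ℂ) := by
    push_cast; ring
  rw [h]
  exact_mod_cast (Finset.sum_pos (fun _ _ => Real.exp_pos _) hA).ne'

lemma gfun_continuous (A : Finset ℂ) (hA : A.Nonempty) (a : ℂ) :
    Continuous (gfun A a) := by
  have hbase : ∀ a' : ℂ, Continuous (fun p : ℂ × ℂ =>
      (Real.exp (-(Norm.norm (p.1 * (a - a') + p.2)) ^ 2) : ℂ)) := by
    intro a'
    exact Complex.continuous_ofReal.comp (Real.continuous_exp.comp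
      ((((continuous_norm.comp
        ((continuous_fst.mul continuous_const).add continuous_snd)).pow 2).neg)))
  have hnum : Continuous (fun p : ℂ × ℂ =>
      ∑ a' ∈ A, a' * (Real.exp (-(Norm.norm (p.1 * (a - a') + p.2)) ^ 2) : ℂ)) :=
    continuous_finset_sum _ (fun a' _ => continuous_const.mul (hbase a'))
  have hden : Continuous (fun p : ℂ × ℂ =>
      ∑ a' ∈ A, (Real.exp (-(Norm.norm (p.1 * (a - a') + p.2)) ^ 2) : ℂ)) :=
    continuous_finset_sum _ (fun a' _ => hbase a')
  have hdiv : Continuous (fun p : ℂ × ℂ =>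
      (∑ a' ∈ A, a' * (Real.exp (-(Norm.norm (p.1 * (a - a') + p.2)) ^ 2) : ℂ)) /
      (∑ a' ∈ A, (Real.exp (-(Norm.norm (p.1 * (a - a') + p.2)) ^ 2) : ℂ))) :=
    hnum.div hden (fun p => gden_ne A hA a p)
  unfold gfun
  exact ((continuous_norm.comp hdiv).pow 2).mul
    (Real.continuous_exp.comp
      (((continuous_norm.comp continuous_snd).pow 2).neg))

lemma gfun_bound (A : Finset ℂ) (hA : A.Nonempty) (a : ℂ) (p : ℂ × ℂ) :
    ‖gfun A a p‖ ≤ (A.sup' hA (fun a => Norm.norm a)) ^ 2 * Real.exp (-(Norm.norm p.2) ^ 2) := by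
  set M := A.sup' hA (fun a => Norm.norm a) with hM
  have hM0 : 0 ≤ M := le_trans (norm_nonneg _) (A.le_sup' _ hA.choose_spec)
  set w : ℂ → ℝ := fun a' => Real.exp (-(Norm.norm (p.1 * (a - a') + p.2)) ^ 2) with hw
  have hwpos : ∀ a' ∈ A, 0 < w a' := fun _ _ => Real.exp_pos _
  have hden : (∑ a' ∈ A, (w a' : ℂ)) = ((∑ a' ∈ A, w a' : ℝ) : ℂ) := by push_cast; ring
  have hpos : 0 < ∑ a' ∈ A, w a' := Finset.sum_pos hwpos hA
  have hratio : Norm.norm ((∑ a' ∈ A, a' * (w a' : ℂ)) / (∑ a' ∈ A, (w a' : ℂ))) ≤ M := by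
    rw [norm_div, hden, Complex.norm_real, Real.norm_eq_abs, abs_of_pos hpos, div_le_iff₀ hpos]
    calc Norm.norm (∑ a' ∈ A, a' * (w a' : ℂ))
        ≤ ∑ a' ∈ A, Norm.norm (a' * (w a' : ℂ)) := norm_sum_le _ _
      _ ≤ ∑ a' ∈ A, M * w a' := by
          apply Finset.sum_le_sum
          intro a' ha'
          rw [norm_mul, Complex.norm_real, Real.norm_eq_abs, abs_of_pos (hwpos a' ha')]
          exact mul_le_mul_of_nonneg_right (A.le_sup' _ ha') (hwpos a' ha').le
      _ = M * ∑ a' ∈ A, w a' := by rw [Finset.mul_sum]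
  unfold gfun
  rw [Real.norm_eq_abs, abs_of_nonneg (by positivity)]
  refine mul_le_mul_of_nonneg_right ?_ (Real.exp_pos _).le
  nlinarith [norm_nonneg ((∑ a' ∈ A, a' * (w a' : ℂ)) / (∑ a' ∈ A, (w a' : ℂ)))]

lemma gfun_zero (A : Finset ℂ) (hA : A.Nonempty) (a z : ℂ) :
    gfun A a (0, z) = (Norm.norm ((1 / (A.card : ℂ)) * ∑ a' ∈ A, a')) ^ 2
      * Real.exp (-(Norm.norm z) ^ 2) := by
  have hcardC : (A.card : ℂ) ≠ 0 :=
    Nat.cast_ne_zero.mpr (Finset.card_pos.mpr hA).ne'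
  have hc : ((Real.exp (-(Norm.norm z) ^ 2) : ℝ) : ℂ) ≠ 0 := by
    exact_mod_cast (Real.exp_pos _).ne'
  unfold gfun
  simp only [zero_mul, zero_add]
  congr 2
  rw [← Finset.sum_mul, Finset.sum_const, nsmul_eq_mul,
    mul_div_mul_right _ _ hc, one_div, inv_mul_eq_div]

lemma integrable_gauss : Integrable (fun z : ℂ => Real.exp (-(Norm.norm z) ^ 2)) := by
  have h := (GaussianFourier.integrable_cexp_neg_mul_sq_norm_add (V := ℂ)
    (b := 1) (by norm_num) 0 0).norm
  apply h.congr
  filter_upwards with z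
  rw [Complex.norm_exp]
  congr 1
  simp [← Complex.ofReal_pow]

lemma integral_gauss : ∫ z : ℂ, Real.exp (-(Norm.norm z) ^ 2) = Real.pi := by
  have h := GaussianFourier.integral_rexp_neg_mul_sq_norm (V := ℂ) (b := 1) one_pos
  simp only [Complex.finrank_real_complex, div_one] at h
  rw [show (fun z : ℂ => Real.exp (-(Norm.norm z) ^ 2))
      = fun z : ℂ => Real.exp (-1 * ‖z‖ ^ 2) by
    funext z; ring_nf]
  rw [h]
  norm_num

/-- As `snr → 0⁺`, the MMSE of a finite nonempty constellation `A ⊂ ℂ` tends to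
the variance of the uniform distribution on `A`. -/
theorem mmse_tendsto_variance (A : Finset ℂ) (hA : A.Nonempty) :
    Tendsto (fun snr => mmse A snr) (nhdsWithin 0 (Set.Ioi 0))
      (nhds ((1 / (A.card : ℝ)) * ∑ a ∈ A, (Norm.norm a) ^ 2
        - (Norm.norm ((1 / (A.card : ℂ)) * ∑ a ∈ A, a)) ^ 2)) := by
  have hcard : (0:ℝ) < A.card := by exact_mod_cast Finset.card_pos.mpr hA
  set m : ℂ := (1 / (A.card : ℂ)) * ∑ a ∈ A, a with hm
  set M : ℝ := A.sup' hA (fun a => Norm.norm a) with hM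
  -- per-constellation-point limit of the integral
  have key : ∀ a ∈ A, Tendsto
      (fun s : ℝ => ∫ z : ℂ, gfun A a ((Real.sqrt s : ℂ), z))
      (nhdsWithin 0 (Set.Ioi 0))
      (nhds ((Norm.norm m) ^ 2 * Real.pi)) := by
    intro a _
    have hlim : Tendsto (fun s : ℝ => ∫ z : ℂ, gfun A a ((Real.sqrt s : ℂ), z))
        (nhdsWithin 0 (Set.Ioi 0))
        (nhds (∫ z : ℂ, (Norm.norm m) ^ 2 * Real.exp (-(Norm.norm z) ^ 2))) := by
      apply tendsto_integral_filter_of_dominated_convergence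
        (bound := fun z : ℂ => M ^ 2 * Real.exp (-(Norm.norm z) ^ 2))
      · filter_upwards with s
        exact ((gfun_continuous A hA a).comp
          (Continuous.prodMk_right ((Real.sqrt s : ℂ)))).aestronglyMeasurable
      · filter_upwards with s
        filter_upwards with z
        exact gfun_bound A hA a _
      · exact integrable_gauss.const_mul _
      · filter_upwards with z
        have hs : Tendsto (fun s : ℝ => ((Real.sqrt s : ℂ), z))
            (nhdsWithin 0 (Set.Ioi 0)) (nhds ((0 : ℂ), z)) := by
          apply Tendsto.prodMk_nhds _ tendsto_const_nhds
          have h2 : Tendsto (fun s : ℝ => ((Real.sqrt s : ℝ) : ℂ)) (nhds 0) (nhds 0) := by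
            have h1 : Tendsto Real.sqrt (nhds 0) (nhds 0) := by
              simpa using Real.continuous_sqrt.tendsto 0
            exact (Complex.continuous_ofReal.tendsto 0).comp h1
          exact h2.mono_left nhdsWithin_le_nhds
        have h3 := ((gfun_continuous A hA a).tendsto ((0:ℂ), z)).comp hs
        rwa [show gfun A a ((0:ℂ), z) = (Norm.norm m) ^ 2 * Real.exp (-(Norm.norm z) ^ 2)
          from gfun_zero A hA a z] at h3
    rwa [integral_const_mul, integral_gauss] at hlim
  -- assemble
  have hsum : Tendsto
      (fun s : ℝ => (1 / (A.card : ℝ)) * ∑ a ∈ A, (Norm.norm a) ^ 2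
        - (1 / (A.card : ℝ)) * ∑ a ∈ A, (1 / Real.pi) *
          ∫ z : ℂ, gfun A a ((Real.sqrt s : ℂ), z))
      (nhdsWithin 0 (Set.Ioi 0))
      (nhds ((1 / (A.card : ℝ)) * ∑ a ∈ A, (Norm.norm a) ^ 2
        - (1 / (A.card : ℝ)) * ∑ a ∈ A, (1 / Real.pi) * ((Norm.norm m) ^ 2 * Real.pi))) := by
    apply tendsto_const_nhds.sub
    exact (tendsto_finset_sum _ (fun a ha => (key a ha).const_mul _)).const_mul _
  have hval : (1 / (A.card : ℝ)) * ∑ a ∈ A, (1 / Real.pi) * ((Norm.norm m) ^ 2 * Real.pi)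
      = (Norm.norm m) ^ 2 := by
    rw [Finset.sum_const, nsmul_eq_mul]
    field_simp
  rw [hval] at hsum
  convert hsum using 2 with s
  rfl
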